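/- Let f = (1/n)∑ᵢfᵢ be differentiable and let v ∈ ℝⁿ be the sampling-with-replacement vector: vᵢ = Sᵢ/(τqᵢ) where (S₁,…,Sₙ) is multinomial with τ trials and probabilities (q₁,…,qₙ), qᵢ > 0, ∑qᵢ = 1. Then E‖(1/n)∑ᵢvᵢ∇fᵢ(x)‖² = (1 − 1/τ)‖∇f(x)‖² + (1/n²)∑ᵢ‖∇fᵢ(x)‖²/(τqᵢ). -/

import Mathlib

open scoped BigOperators

lemma single {n τ : ℕ} (q : Fin n → ℝ) (hq1 : ∑ i, q i = 1) (k : Fin τ) (φ : Fin n → ℝ) :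
    ∑ ρ : Fin τ → Fin n, (∏ m, q (ρ m)) * φ (ρ k) = ∑ a, q a * φ a := by
  have h1 : ∀ ρ : Fin τ → Fin n, (∏ m, q (ρ m)) * φ (ρ k)
      = ∏ m, (q (ρ m) * (if m = k then φ (ρ m) else 1)) := by
    intro ρ
    rw [Finset.prod_mul_distrib, Finset.prod_ite_eq', if_pos (Finset.mem_univ k)]
  simp only [h1]
  rw [← Fintype.prod_sum (fun m c => q c * (if m = k then φ c else 1))]
  have h2 : ∀ m : Fin τ, (∑ c, q c * (if m = k then φ c else 1))
      = if m = k then (∑ a, q a * φ a) else 1 := by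
    intro m
    by_cases h : m = k <;> simp [h, hq1]
  simp only [h2, Finset.prod_ite_eq', Finset.mem_univ, if_true]

lemma pairind {n τ : ℕ} (q : Fin n → ℝ) (hq1 : ∑ i, q i = 1) {k l : Fin τ} (hkl : k ≠ l)
    (a b : Fin n) :
    ∑ ρ : Fin τ → Fin n, (∏ m, q (ρ m)) *
      ((if ρ k = a then (1:ℝ) else 0) * (if ρ l = b then (1:ℝ) else 0)) = q a * q b := by
  have h1 : ∀ ρ : Fin τ → Fin n, (∏ m, q (ρ m)) *
      ((if ρ k = a then (1:ℝ) else 0) * (if ρ l = b then (1:ℝ) else 0))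
      = ∏ m, (q (ρ m) * ((if m = k then (if ρ m = a then (1:ℝ) else 0) else 1)
          * (if m = l then (if ρ m = b then (1:ℝ) else 0) else 1))) := by
    intro ρ
    rw [Finset.prod_mul_distrib, Finset.prod_mul_distrib,
        Finset.prod_ite_eq', if_pos (Finset.mem_univ k),
        Finset.prod_ite_eq', if_pos (Finset.mem_univ l)]
  simp only [h1]
  rw [← Fintype.prod_sum (fun m c => q c * ((if m = k then (if c = a then (1:ℝ) else 0) else 1)
          * (if m = l then (if c = b then (1:ℝ) else 0) else 1)))]
  have h2 : ∀ m : Fin τ, (∑ c, q c * ((if m = k then (if c = a then (1:ℝ) else 0) else 1)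
      * (if m = l then (if c = b then (1:ℝ) else 0) else 1)))
      = (if m = k then q a else 1) * (if m = l then q b else 1) := by
    intro m
    rcases eq_or_ne m k with h | h
    · subst h; simp [if_neg hkl, mul_ite]
    · rcases eq_or_ne m l with h' | h'
      · subst h'; simp [h, mul_ite]
      · simp [h, h', hq1]
  simp only [h2]
  rw [Finset.prod_mul_distrib, Finset.prod_ite_eq', if_pos (Finset.mem_univ k),
      Finset.prod_ite_eq', if_pos (Finset.mem_univ l)]

lemma pair {n τ : ℕ} (q : Fin n → ℝ) (hq1 : ∑ i, q i = 1) {k l : Fin τ} (hkl : k ≠ l)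
    (φ : Fin n → Fin n → ℝ) :
    ∑ ρ : Fin τ → Fin n, (∏ m, q (ρ m)) * φ (ρ k) (ρ l)
      = ∑ a, ∑ b, q a * q b * φ a b := by
  have h1 : ∀ ρ : Fin τ → Fin n, (∏ m, q (ρ m)) * φ (ρ k) (ρ l)
      = ∑ a, ∑ b, ((∏ m, q (ρ m)) *
        ((if ρ k = a then (1:ℝ) else 0) * (if ρ l = b then (1:ℝ) else 0))) * φ a b := by
    intro ρ
    simp [ite_mul, mul_ite, Finset.sum_ite_eq', mul_zero, zero_mul]
  simp only [h1]
  rw [Finset.sum_comm]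
  refine Finset.sum_congr rfl fun a _ => ?_
  rw [Finset.sum_comm]
  refine Finset.sum_congr rfl fun b _ => ?_
  rw [← Finset.sum_mul, pairind q hq1 hkl a b]

open scoped RealInnerProductSpace in
theorem stmt18 {d : ℕ} (n τ : ℕ) (hn : 0 < n) (hτ : 1 ≤ τ)
    (f : Fin n → EuclideanSpace ℝ (Fin d) → ℝ)
    (hdiff : ∀ i, Differentiable ℝ (f i))
    (F : EuclideanSpace ℝ (Fin d) → ℝ)
    (hF : F = fun y => (1 / (n : ℝ)) * ∑ i, f i y)
    (q : Fin n → ℝ) (hq : ∀ i, 0 < q i) (hq1 : ∑ i, q i = 1)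
    (x : EuclideanSpace ℝ (Fin d)) :
    ∑ ρ : Fin τ → Fin n, (∏ k, q (ρ k)) *
        ‖(1 / (n : ℝ)) • ∑ i,
          (((Finset.univ.filter fun k => ρ k = i).card : ℝ) / (τ * q i)) •
            gradient (f i) x‖ ^ 2
      = (1 - 1 / (τ : ℝ)) * ‖gradient F x‖ ^ 2
        + (1 / (n : ℝ) ^ 2) * ∑ i, ‖gradient (f i) x‖ ^ 2 / (τ * q i) := by
  classical
  have hn0 : (n : ℝ) ≠ 0 := Nat.cast_ne_zero.mpr hn.ne'
  have hτ0 : (τ : ℝ) ≠ 0 := Nat.cast_ne_zero.mpr (by omega)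
  set g : Fin n → EuclideanSpace ℝ (Fin d) := fun i => gradient (f i) x with hgdef
  set u : Fin n → EuclideanSpace ℝ (Fin d) := fun a => (q a)⁻¹ • g a with hu
  -- gradient of F
  have hgF : gradient F x = (n : ℝ)⁻¹ • ∑ i, g i := by
    have hds : DifferentiableAt ℝ (fun y => ∑ i, f i y) x :=
      DifferentiableAt.fun_sum fun i _ => (hdiff i).differentiableAt
    have hfd : fderiv ℝ F x = (n : ℝ)⁻¹ • ∑ i, fderiv ℝ (f i) x := by
      rw [hF]
      simp only [one_div]
      rw [fderiv_const_mul hds, fderiv_fun_sum fun i _ => (hdiff i).differentiableAt]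
    simp only [gradient, hfd, map_smul, map_sum]
    rfl
  -- step 1: rewrite the sampled vector
  have hsum : ∀ ρ : Fin τ → Fin n,
      ((1 / (n : ℝ)) • ∑ i,
        (((Finset.univ.filter fun k => ρ k = i).card : ℝ) / (↑τ * q i)) • g i)
      = ((n : ℝ) * τ)⁻¹ • ∑ k, u (ρ k) := by
    intro ρ
    have h1 : ∑ k, u (ρ k)
        = ∑ i, (((Finset.univ.filter fun k => ρ k = i).card : ℝ)) • u i := by
      rw [← Finset.sum_fiberwise' Finset.univ ρ u]
      refine Finset.sum_congr rfl fun i _ => ?_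
      rw [Finset.sum_const, ← Nat.cast_smul_eq_nsmul ℝ]
    rw [h1, Finset.smul_sum, Finset.smul_sum]
    refine Finset.sum_congr rfl fun i _ => ?_
    rw [hu]
    rw [smul_smul, smul_smul, smul_smul]
    congr 1
    field_simp
  -- step 2: expand the squared norm
  have hnorm : ∀ ρ : Fin τ → Fin n,
      ‖((n : ℝ) * τ)⁻¹ • ∑ k, u (ρ k)‖ ^ 2
      = (((n : ℝ) * τ)⁻¹) ^ 2 * ∑ k, ∑ l, ⟪u (ρ k), u (ρ l)⟫ := by
    intro ρ
    rw [norm_smul, mul_pow, Real.norm_eq_abs, sq_abs, ← real_inner_self_eq_norm_sq,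
      inner_sum]
    simp only [sum_inner]
    congr 1
    rw [Finset.sum_comm]
  change ∑ ρ : Fin τ → Fin n, (∏ k, q (ρ k)) * ‖(1 / (n : ℝ)) • ∑ i,
      (((Finset.univ.filter fun k => ρ k = i).card : ℝ) / (τ * q i)) • g i‖ ^ 2
    = (1 - 1 / (τ : ℝ)) * ‖gradient F x‖ ^ 2 + (1 / (n : ℝ) ^ 2) * ∑ i, ‖g i‖ ^ 2 / (τ * q i)
  simp only [hsum, hnorm]
  -- pull out constants and swap sums
  have hswap : ∑ ρ : Fin τ → Fin n, (∏ k, q (ρ k)) *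
      ((((n : ℝ) * τ)⁻¹) ^ 2 * ∑ k, ∑ l, ⟪u (ρ k), u (ρ l)⟫)
      = (((n : ℝ) * τ)⁻¹) ^ 2 *
        ∑ k, ∑ l, ∑ ρ : Fin τ → Fin n, (∏ m, q (ρ m)) * ⟪u (ρ k), u (ρ l)⟫ := by
    have e1 : ∀ ρ : Fin τ → Fin n, (∏ k, q (ρ k)) *
        ((((n : ℝ) * τ)⁻¹) ^ 2 * ∑ k, ∑ l, ⟪u (ρ k), u (ρ l)⟫)
        = (((n : ℝ) * τ)⁻¹) ^ 2 * ((∏ k, q (ρ k)) * ∑ k, ∑ l, ⟪u (ρ k), u (ρ l)⟫) :=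
      fun ρ => by ring
    simp only [e1, ← Finset.mul_sum]
    congr 1
    simp only [Finset.mul_sum]
    rw [Finset.sum_comm]
    refine Finset.sum_congr rfl fun k _ => by rw [Finset.sum_comm]
  rw [hswap]
  set A : ℝ := ∑ a, q a * ⟪u a, u a⟫ with hA
  set B : ℝ := ∑ a, ∑ b, q a * q b * ⟪u a, u b⟫ with hB
  have hdiag : ∀ k : Fin τ,
      ∑ ρ : Fin τ → Fin n, (∏ m, q (ρ m)) * ⟪u (ρ k), u (ρ k)⟫ = A :=
    fun k => single q hq1 k (fun a => ⟪u a, u a⟫)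
  have hoff : ∀ k l : Fin τ, k ≠ l →
      ∑ ρ : Fin τ → Fin n, (∏ m, q (ρ m)) * ⟪u (ρ k), u (ρ l)⟫ = B :=
    fun k l hkl => pair q hq1 hkl (fun a b => ⟪u a, u b⟫)
  have hl : ∀ k : Fin τ,
      (∑ l, ∑ ρ : Fin τ → Fin n, (∏ m, q (ρ m)) * ⟪u (ρ k), u (ρ l)⟫)
      = A + ((τ : ℝ) - 1) * B := by
    intro k
    rw [← Finset.add_sum_erase _ _ (Finset.mem_univ k), hdiag k,
        Finset.sum_congr rfl (fun l hl => hoff k l (Ne.symm (Finset.ne_of_mem_erase hl))),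
        Finset.sum_const, Finset.card_erase_of_mem (Finset.mem_univ k),
        Finset.card_univ, Fintype.card_fin, nsmul_eq_mul, Nat.cast_sub hτ, Nat.cast_one]
  simp only [hl]
  rw [Finset.sum_const, Finset.card_univ, Fintype.card_fin, nsmul_eq_mul]
  -- compute A and B
  have hA' : A = ∑ a, ‖g a‖ ^ 2 / q a := by
    rw [hA]
    refine Finset.sum_congr rfl fun a _ => ?_
    have hqa := (hq a).ne'
    rw [hu, real_inner_smul_left, real_inner_smul_right, real_inner_self_eq_norm_sq]
    field_simp
  have hB' : B = ‖∑ i, g i‖ ^ 2 := by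
    rw [hB, ← real_inner_self_eq_norm_sq, inner_sum]
    simp only [sum_inner]
    rw [Finset.sum_comm]
    refine Finset.sum_congr rfl fun a _ => Finset.sum_congr rfl fun b _ => ?_
    have hqa := (hq a).ne'
    have hqb := (hq b).ne'
    show q b * q a * ⟪(q b)⁻¹ • g b, (q a)⁻¹ • g a⟫ = ⟪g b, g a⟫
    rw [real_inner_smul_left, real_inner_smul_right]
    field_simp
  have hRHS1 : ‖gradient F x‖ ^ 2 = ((n : ℝ)⁻¹) ^ 2 * ‖∑ i, g i‖ ^ 2 := by
    rw [hgF, norm_smul, mul_pow, Real.norm_eq_abs, sq_abs]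
  have hRHS2 : ∑ i, ‖g i‖ ^ 2 / (↑τ * q i) = (τ : ℝ)⁻¹ * ∑ i, ‖g i‖ ^ 2 / q i := by
    rw [Finset.mul_sum]
    refine Finset.sum_congr rfl fun i _ => ?_
    have hqi := (hq i).ne'
    field_simp
  rw [hRHS1, hRHS2, hA', hB']
  field_simp
  ring
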